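/- In the setting of the time-varying covariance recursion with ‖M‖₂ < 1 and ‖Σ_{Z_n} − Σ_{Z_{n-1}}‖₂ ≤ ξ for all n ≥ 1, suppose each Σ_{Z_n} is a convex combination Σ_{Z_n} = Σ_{k=1}^d θ_{n,k} Σ_{z,k} with θ_n ≥ 0 and 𝟏ᵀθ_n = 1, and let Σ̄_{δ,k} be the unique symmetric solution of X = M X Mᵀ + Σ_W + L Σ_{z,k} Lᵀ for each k. Set ε := ξ ‖C‖₂² ‖L‖₂² ‖M‖₂² / (1 − ‖M‖₂²)². Then for every n ≥ 0 there exists a matrix P in the convex hull of { C Σ̄_{δ,k} Cᵀ + Σ_{z,k} : k = 1,…,d } and a symmetric matrix E with −εI ⪯ E ⪯ εI such that C Σ_{Δ_n} Cᵀ + Σ_{Z_n} = P + E; that is, C Σ_{Δ_n} Cᵀ + Σ_{Z_n} lies in the Minkowski sum of that convex hull and { E symmetric : −εI ⪯ E ⪯ εI }. -/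

import Mathlib

open Matrix
open scoped Matrix.Norms.L2Operator

lemma real_conjTranspose_eq {p q : ℕ} (M : Matrix (Fin p) (Fin q) ℝ) : Mᴴ = Mᵀ := by
  ext i j; simp [Matrix.conjTranspose_apply]

lemma l2_norm_transpose {p q : ℕ} (M : Matrix (Fin p) (Fin q) ℝ) : ‖Mᵀ‖ = ‖M‖ := by
  rw [← real_conjTranspose_eq, Matrix.l2_opNorm_conjTranspose]

lemma l2_norm_conj {p q : ℕ} (A : Matrix (Fin p) (Fin q) ℝ) (Z : Matrix (Fin q) (Fin q) ℝ) :
    ‖A * Z * Aᵀ‖ ≤ ‖A‖ * ‖Z‖ * ‖A‖ := by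
  calc ‖A * Z * Aᵀ‖ ≤ ‖A * Z‖ * ‖Aᵀ‖ := Matrix.l2_opNorm_mul _ _
  _ ≤ ‖A‖ * ‖Z‖ * ‖Aᵀ‖ :=
      mul_le_mul_of_nonneg_right (Matrix.l2_opNorm_mul A Z) (norm_nonneg _)
  _ = ‖A‖ * ‖Z‖ * ‖A‖ := by rw [l2_norm_transpose]

lemma conj_sum {a b d : ℕ} (A : Matrix (Fin a) (Fin b) ℝ) (w : Fin d → ℝ)
    (S : Fin d → Matrix (Fin b) (Fin b) ℝ) :
    A * (∑ k, w k • S k) * Aᵀ = ∑ k, w k • (A * S k * Aᵀ) := by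
  rw [Matrix.mul_sum, Matrix.sum_mul]
  simp only [Matrix.smul_mul, Matrix.mul_smul]

/-- Uniqueness of the fixed point of `X = M X Mᵀ + B` when `‖M‖ < 1`. -/
lemma fixed_point_unique {p : ℕ} (M : Matrix (Fin p) (Fin p) ℝ) (hM : ‖M‖ < 1)
    (A A' B : Matrix (Fin p) (Fin p) ℝ)
    (hA : A = M * A * Mᵀ + B) (hA' : A' = M * A' * Mᵀ + B) : A = A' := by
  have hD : A - A' = M * (A - A') * Mᵀ := by
    calc A - A' = (M * A * Mᵀ + B) - (M * A' * Mᵀ + B) := by rw [← hA, ← hA']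
    _ = M * (A - A') * Mᵀ := by noncomm_ring
  have hb : ‖A - A'‖ ≤ ‖M‖ * ‖A - A'‖ * ‖M‖ := by
    calc ‖A - A'‖ = ‖M * (A - A') * Mᵀ‖ := by rw [← hD]
    _ ≤ ‖M‖ * ‖A - A'‖ * ‖M‖ := l2_norm_conj M _
  have hm2 : ‖M‖ * ‖M‖ < 1 := by nlinarith [norm_nonneg M]
  have h0 : ‖A - A'‖ = 0 := by
    nlinarith [norm_nonneg (A - A')]
  exact sub_eq_zero.mp (norm_eq_zero.mp h0)

/-- Norm bound for the fixed point of `Y = M Y Mᵀ + R`. -/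
lemma fixed_point_norm_le {p : ℕ} (M : Matrix (Fin p) (Fin p) ℝ) (hM : ‖M‖ < 1)
    (Y R : Matrix (Fin p) (Fin p) ℝ) (hY : Y = M * Y * Mᵀ + R) :
    ‖Y‖ ≤ ‖R‖ / (1 - ‖M‖ ^ 2) := by
  have h1 : 0 < 1 - ‖M‖ ^ 2 := by nlinarith [norm_nonneg M]
  have hb : ‖Y‖ ≤ ‖M‖ * ‖Y‖ * ‖M‖ + ‖R‖ := by
    calc ‖Y‖ = ‖M * Y * Mᵀ + R‖ := by rw [← hY]
    _ ≤ ‖M * Y * Mᵀ‖ + ‖R‖ := norm_add_le _ _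
    _ ≤ ‖M‖ * ‖Y‖ * ‖M‖ + ‖R‖ := add_le_add (l2_norm_conj M Y) le_rfl
  rw [le_div_iff₀ h1]
  nlinarith [norm_nonneg Y]

/-- Transposing `M A Mᵀ + B` with symmetric `B`. -/
lemma transpose_MAMB {p : ℕ} (M A B : Matrix (Fin p) (Fin p) ℝ) (hB : Bᵀ = B) :
    (M * A * Mᵀ + B)ᵀ = M * Aᵀ * Mᵀ + B := by
  rw [Matrix.transpose_add, hB, Matrix.transpose_mul, Matrix.transpose_mul,
    Matrix.transpose_transpose, mul_assoc]

/-- A symmetric real matrix with spectral norm at most `ε` satisfies `E ⪯ ε I`. -/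
lemma psd_smul_one_sub_of_norm_le {m : ℕ} (E : Matrix (Fin m) (Fin m) ℝ) (hE : Eᵀ = E)
    (ε : ℝ) (h : ‖E‖ ≤ ε) : (ε • (1 : Matrix (Fin m) (Fin m) ℝ) - E).PosSemidef := by
  rw [Matrix.posSemidef_iff_dotProduct_mulVec]
  constructor
  · rw [Matrix.IsHermitian, real_conjTranspose_eq, Matrix.transpose_sub, Matrix.transpose_smul,
      Matrix.transpose_one, hE]
  · intro x
    have hsx : star x = x := by simp
    set y : EuclideanSpace ℝ (Fin m) := (WithLp.equiv 2 (Fin m → ℝ)).symm x with hy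
    have hxy : ∀ z : Fin m → ℝ, dotProduct x z
        = inner ℝ y ((WithLp.equiv 2 (Fin m → ℝ)).symm z) := by
      intro z
      rw [hy, WithLp.equiv_symm_apply, EuclideanSpace.inner_toLp_toLp, star_trivial, dotProduct_comm]
    have hmv : (ε • (1 : Matrix (Fin m) (Fin m) ℝ) - E) *ᵥ x = ε • x - E *ᵥ x := by
      rw [Matrix.sub_mulVec, Matrix.smul_mulVec, Matrix.one_mulVec]
    rw [hsx, hmv, dotProduct_sub, dotProduct_smul]
    have hEx : dotProduct x (E *ᵥ x) ≤ ε * dotProduct x x := by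
      rw [hxy (E *ᵥ x), hxy x]
      have hself : inner ℝ y ((WithLp.equiv 2 (Fin m → ℝ)).symm x) = ‖y‖ ^ 2 := by
        rw [← hy, real_inner_self_eq_norm_sq]
      rw [hself]
      calc inner ℝ y ((WithLp.equiv 2 (Fin m → ℝ)).symm (E *ᵥ x))
          ≤ ‖y‖ * ‖(WithLp.equiv 2 (Fin m → ℝ)).symm (E *ᵥ x)‖ := real_inner_le_norm _ _
        _ ≤ ‖y‖ * (‖E‖ * ‖y‖) := by
            gcongr
            exact Matrix.l2_opNorm_mulVec E y
        _ ≤ ε * ‖y‖ ^ 2 := by nlinarith [norm_nonneg y, norm_nonneg E]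
    simp only [smul_eq_mul] at hEx ⊢
    linarith

/-- Lemma 5 of the paper. For the time-varying observer error covariance
recursion with `‖M‖₂ < 1` and step sizes `‖Σ_{Z_n} - Σ_{Z_{n-1}}‖₂ ≤ ξ`, where each
`Σ_{Z_n}` is a convex combination of the vertices `Σ_{z,k}` (here `Sz k`) and `Σ̄_{δ,k}`
(here `Sδ k`) is the unique symmetric solution of `X = M X Mᵀ + Σ_W + L Σ_{z,k} Lᵀ`, the
matrix `C Σ_{Δ_n} Cᵀ + Σ_{Z_n}` lies in the Minkowski sum of the convex hull of
`{C Σ̄_{δ,k} Cᵀ + Σ_{z,k}}` and `{E symmetric : -εI ⪯ E ⪯ εI}` with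
`ε = ξ ‖C‖₂² ‖L‖₂² ‖M‖₂² / (1 - ‖M‖₂²)²`. Here `‖·‖` is the spectral (L2 operator) norm. -/
theorem time_varying_covariance_in_expanded_omega
    {p m d : ℕ}
    (M : Matrix (Fin p) (Fin p) ℝ) (L : Matrix (Fin p) (Fin m) ℝ)
    (C : Matrix (Fin m) (Fin p) ℝ)
    (hM : ‖M‖ < 1)
    (SW : Matrix (Fin p) (Fin p) ℝ) (hSW : SWᵀ = SW)
    (Sz : Fin d → Matrix (Fin m) (Fin m) ℝ) (hSz : ∀ k, (Sz k)ᵀ = Sz k)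
    (SZ : ℕ → Matrix (Fin m) (Fin m) ℝ)
    (θ : ℕ → Fin d → ℝ)
    (hθ0 : ∀ n k, 0 ≤ θ n k) (hθ1 : ∀ n, ∑ k, θ n k = 1)
    (hSZ : ∀ n, SZ n = ∑ k, θ n k • Sz k)
    (ξ : ℝ) (hξ : ∀ n : ℕ, 1 ≤ n → ‖SZ n - SZ (n - 1)‖ ≤ ξ)
    (Sδ : Fin d → Matrix (Fin p) (Fin p) ℝ)
    (hSδSymm : ∀ k, (Sδ k)ᵀ = Sδ k)
    (hSδ : ∀ k, Sδ k = M * Sδ k * Mᵀ + SW + L * Sz k * Lᵀ)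
    (SD : ℕ → Matrix (Fin p) (Fin p) ℝ)
    (h0 : SD 0 = M * SD 0 * Mᵀ + SW + L * SZ 0 * Lᵀ)
    (hrec : ∀ n : ℕ, 1 ≤ n → SD n = M * SD (n - 1) * Mᵀ + SW + L * SZ n * Lᵀ)
    (ε : ℝ) (hε : ε = ξ * ‖C‖ ^ 2 * ‖L‖ ^ 2 * ‖M‖ ^ 2 / (1 - ‖M‖ ^ 2) ^ 2) :
    ∀ n : ℕ, ∃ P ∈ convexHull ℝ
        {X : Matrix (Fin m) (Fin m) ℝ | ∃ k, X = C * Sδ k * Cᵀ + Sz k},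
      ∃ E : Matrix (Fin m) (Fin m) ℝ, Eᵀ = E ∧
        (E + ε • (1 : Matrix (Fin m) (Fin m) ℝ)).PosSemidef ∧
        (ε • (1 : Matrix (Fin m) (Fin m) ℝ) - E).PosSemidef ∧
        C * SD n * Cᵀ + SZ n = P + E := by
  intro n
  -- basic positivity facts
  have hM0 : (0 : ℝ) ≤ ‖M‖ := norm_nonneg M
  have h1 : 0 < 1 - ‖M‖ ^ 2 := by nlinarith
  have hξ0 : 0 ≤ ξ := le_trans (norm_nonneg _) (hξ 1 le_rfl)
  -- the steady-state convex combinations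
  set X : ℕ → Matrix (Fin p) (Fin p) ℝ := fun j => ∑ k, θ j k • Sδ k with hX
  have hMX : ∀ j, M * X j * Mᵀ = ∑ k, θ j k • (M * Sδ k * Mᵀ) := by
    intro j
    show M * (∑ k, θ j k • Sδ k) * Mᵀ = _
    exact conj_sum M (θ j) Sδ
  have hLZ : ∀ j, L * SZ j * Lᵀ = ∑ k, θ j k • (L * Sz k * Lᵀ) := by
    intro j
    rw [hSZ j]
    exact conj_sum L (θ j) Sz
  have hSWs : ∀ j, (∑ k, θ j k • SW) = SW := by
    intro j; rw [← Finset.sum_smul, hθ1, one_smul]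
  have hXfix : ∀ j, X j = M * X j * Mᵀ + SW + L * SZ j * Lᵀ := by
    intro j
    rw [hMX, hLZ, ← hSWs j, ← Finset.sum_add_distrib, ← Finset.sum_add_distrib]
    refine Finset.sum_congr rfl fun k _ => ?_
    conv_lhs => rw [hSδ k]
    rw [smul_add, smul_add]
  -- symmetry facts
  have hSZsymm : ∀ j, (SZ j)ᵀ = SZ j := by
    intro j
    rw [hSZ j, Matrix.transpose_sum]
    exact Finset.sum_congr rfl fun k _ => by rw [Matrix.transpose_smul, hSz k]
  have hXsymm : ∀ j, (X j)ᵀ = X j := by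
    intro j
    rw [hX, Matrix.transpose_sum]
    exact Finset.sum_congr rfl fun k _ => by rw [Matrix.transpose_smul, hSδSymm k]
  have hBsymm : ∀ j, (SW + L * SZ j * Lᵀ)ᵀ = SW + L * SZ j * Lᵀ := by
    intro j
    rw [Matrix.transpose_add, hSW, Matrix.transpose_mul, Matrix.transpose_mul,
      Matrix.transpose_transpose, hSZsymm, Matrix.mul_assoc]
  have hSDsymm : ∀ j, (SD j)ᵀ = SD j := by
    intro j
    induction j with
    | zero =>
      apply fixed_point_unique M hM _ _ (SW + L * SZ 0 * Lᵀ)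
      · conv_lhs => rw [h0, add_assoc]
        rw [transpose_MAMB _ _ _ (hBsymm 0)]
      · conv_lhs => rw [h0]
        rw [add_assoc]
    | succ i ih =>
      have hr := hrec (i + 1) (by omega)
      simp only [Nat.add_sub_cancel] at hr
      conv_lhs => rw [hr, add_assoc]
      rw [transpose_MAMB _ _ _ (hBsymm (i + 1)), ih, ← add_assoc, ← hr]
  -- SD 0 equals the steady-state X 0
  have hSD0 : SD 0 = X 0 := by
    apply fixed_point_unique M hM _ _ (SW + L * SZ 0 * Lᵀ)
    · conv_lhs => rw [h0]
      rw [add_assoc]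
    · conv_lhs => rw [hXfix 0]
      rw [add_assoc]
  -- step size of the steady states
  set γ : ℝ := ξ * ‖L‖ ^ 2 / (1 - ‖M‖ ^ 2) with hγ
  have hXstep : ∀ j : ℕ, ‖X (j + 1) - X j‖ ≤ γ := by
    intro j
    have hY : X (j + 1) - X j
        = M * (X (j + 1) - X j) * Mᵀ + L * (SZ (j + 1) - SZ j) * Lᵀ := by
      calc X (j + 1) - X j = (M * X (j + 1) * Mᵀ + SW + L * SZ (j + 1) * Lᵀ)
          - (M * X j * Mᵀ + SW + L * SZ j * Lᵀ) := by rw [← hXfix, ← hXfix]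
      _ = M * (X (j + 1) - X j) * Mᵀ + L * (SZ (j + 1) - SZ j) * Lᵀ := by
          simp only [Matrix.mul_sub, Matrix.sub_mul]; abel
    have h2 := fixed_point_norm_le M hM _ _ hY
    have h3 : ‖L * (SZ (j + 1) - SZ j) * Lᵀ‖ ≤ ‖L‖ * ξ * ‖L‖ := by
      calc ‖L * (SZ (j + 1) - SZ j) * Lᵀ‖ ≤ ‖L‖ * ‖SZ (j + 1) - SZ j‖ * ‖L‖ :=
        l2_norm_conj L _
      _ ≤ ‖L‖ * ξ * ‖L‖ := by
          have := hξ (j + 1) (by omega)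
          simp only [Nat.add_sub_cancel] at this
          have hL0 : (0:ℝ) ≤ ‖L‖ := norm_nonneg L
          nlinarith
    calc ‖X (j + 1) - X j‖ ≤ ‖L * (SZ (j + 1) - SZ j) * Lᵀ‖ / (1 - ‖M‖ ^ 2) := h2
    _ ≤ (‖L‖ * ξ * ‖L‖) / (1 - ‖M‖ ^ 2) := by
        exact (div_le_div_iff_of_pos_right h1).mpr h3
    _ = γ := by rw [hγ]; ring
  -- bound on the deviation from steady state
  set β : ℝ := ξ * ‖L‖ ^ 2 * ‖M‖ ^ 2 / (1 - ‖M‖ ^ 2) ^ 2 with hβ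
  have hγ0 : 0 ≤ γ := by
    rw [hγ]; positivity
  have hβ0 : 0 ≤ β := by
    rw [hβ]; positivity
  have hkey : ‖M‖ * (β + γ) * ‖M‖ ≤ β := by
    have : ‖M‖ * (β + γ) * ‖M‖ = β := by
      rw [hβ, hγ]; field_simp; ring
    linarith
  have hDle : ∀ j, ‖SD j - X j‖ ≤ β := by
    intro j
    induction j with
    | zero => rw [hSD0, sub_self, norm_zero]; exact hβ0
    | succ i ih =>
      have hr := hrec (i + 1) (by omega)
      simp only [Nat.add_sub_cancel] at hr
      have hD : SD (i + 1) - X (i + 1)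
          = M * ((SD i - X i) + (X i - X (i + 1))) * Mᵀ := by
        calc SD (i + 1) - X (i + 1) = (M * SD i * Mᵀ + SW + L * SZ (i + 1) * Lᵀ)
            - (M * X (i + 1) * Mᵀ + SW + L * SZ (i + 1) * Lᵀ) := by rw [← hr, ← hXfix]
        _ = M * ((SD i - X i) + (X i - X (i + 1))) * Mᵀ := by
            simp only [Matrix.mul_sub, Matrix.sub_mul, Matrix.mul_add, Matrix.add_mul]; abel
      calc ‖SD (i + 1) - X (i + 1)‖
          = ‖M * ((SD i - X i) + (X i - X (i + 1))) * Mᵀ‖ := by rw [hD]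
      _ ≤ ‖M‖ * ‖(SD i - X i) + (X i - X (i + 1))‖ * ‖M‖ := l2_norm_conj M _
      _ ≤ ‖M‖ * (β + γ) * ‖M‖ := by
          have h4 : ‖(SD i - X i) + (X i - X (i + 1))‖ ≤ β + γ := by
            calc ‖(SD i - X i) + (X i - X (i + 1))‖
                ≤ ‖SD i - X i‖ + ‖X i - X (i + 1)‖ := norm_add_le _ _
            _ ≤ β + γ := by
                have := hXstep i
                rw [norm_sub_rev] at this
                linarith
          nlinarith
      _ ≤ β := hkey
  -- assemble witnesses
  refine ⟨∑ k, θ n k • (C * Sδ k * Cᵀ + Sz k), ?_, C * (SD n - X n) * Cᵀ, ?_, ?_, ?_, ?_⟩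
  · exact (convex_convexHull ℝ _).sum_mem (fun k _ => hθ0 n k) (hθ1 n)
      (fun k _ => subset_convexHull ℝ _ ⟨k, rfl⟩)
  · rw [Matrix.transpose_mul, Matrix.transpose_mul, Matrix.transpose_transpose,
      Matrix.transpose_sub, hSDsymm, hXsymm, Matrix.mul_assoc]
  · have hnorm : ‖-(C * (SD n - X n) * Cᵀ)‖ ≤ ε := by
      rw [norm_neg, hε]
      calc ‖C * (SD n - X n) * Cᵀ‖ ≤ ‖C‖ * ‖SD n - X n‖ * ‖C‖ := l2_norm_conj C _
      _ ≤ ‖C‖ * β * ‖C‖ := by nlinarith [norm_nonneg C, hDle n]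
      _ = ξ * ‖C‖ ^ 2 * ‖L‖ ^ 2 * ‖M‖ ^ 2 / (1 - ‖M‖ ^ 2) ^ 2 := by
          rw [hβ]; field_simp
    have hsymm : (-(C * (SD n - X n) * Cᵀ))ᵀ = -(C * (SD n - X n) * Cᵀ) := by
      rw [Matrix.transpose_neg, Matrix.transpose_mul, Matrix.transpose_mul,
        Matrix.transpose_transpose, Matrix.transpose_sub, hSDsymm, hXsymm, Matrix.mul_assoc]
    have := psd_smul_one_sub_of_norm_le _ hsymm ε hnorm
    rw [sub_neg_eq_add, add_comm] at this
    exact this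
  · apply psd_smul_one_sub_of_norm_le
    · rw [Matrix.transpose_mul, Matrix.transpose_mul, Matrix.transpose_transpose,
        Matrix.transpose_sub, hSDsymm, hXsymm, Matrix.mul_assoc]
    · rw [hε]
      calc ‖C * (SD n - X n) * Cᵀ‖ ≤ ‖C‖ * ‖SD n - X n‖ * ‖C‖ := l2_norm_conj C _
      _ ≤ ‖C‖ * β * ‖C‖ := by nlinarith [norm_nonneg C, hDle n]
      _ = ξ * ‖C‖ ^ 2 * ‖L‖ ^ 2 * ‖M‖ ^ 2 / (1 - ‖M‖ ^ 2) ^ 2 := by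
          rw [hβ]; field_simp
  · have hP : (∑ k, θ n k • (C * Sδ k * Cᵀ + Sz k)) = C * X n * Cᵀ + SZ n := by
      rw [hSZ n]
      have hCX : C * X n * Cᵀ = ∑ k, θ n k • (C * Sδ k * Cᵀ) := by
        show C * (∑ k, θ n k • Sδ k) * Cᵀ = _
        exact conj_sum C (θ n) Sδ
      rw [hCX, ← Finset.sum_add_distrib]
      exact Finset.sum_congr rfl fun k _ => by rw [smul_add]
    rw [hP]
    simp only [Matrix.mul_sub, Matrix.sub_mul]
    abel
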